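/- With Λ = R[x₀,…,x_n]/(Σx_i² − 1), F the free Λ-supermodule on s₀,…,s_n, and g(s_i) = Σ_j x̄_i x̄_j s_j, the image of g is a free Λ-supermodule of rank 1 generated by α = Σ_{j=0}^n x̄_j s_j; consequently P = ker g is a stably free super projective Λ-module, with P ⊕ Λα ≅ F. -/

import Mathlib

open MulOpposite

structure SuperRingStruct (R : Type) [Ring R] : Type where
  grade : ZMod 2 → AddSubgroup R
  isInternal : DirectSum.IsInternal grade
  one_mem : (1 : R) ∈ grade 0
  mul_mem : ∀ {i j : ZMod 2} {a b : R}, a ∈ grade i → b ∈ grade j → a * b ∈ grade (i + j)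

def SuperRingStruct.IsSuperComm {R : Type} [Ring R] (S : SuperRingStruct R) : Prop :=
  ∀ {i j : ZMod 2} {a b : R}, a ∈ S.grade i → b ∈ S.grade j →
    a * b = ((-1 : ℤ) ^ (i.val * j.val)) • (b * a)

structure SuperModule (R : Type) [Ring R] (S : SuperRingStruct R) : Type 1 where
  carrier : Type
  [acg : AddCommGroup carrier]
  [mod : Module Rᵐᵒᵖ carrier]
  grade : ZMod 2 → AddSubgroup carrier
  isInternal : DirectSum.IsInternal grade
  smul_mem : ∀ {i j : ZMod 2} {a : R} {x : carrier}, a ∈ S.grade i → x ∈ grade j →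
    op a • x ∈ grade (i + j)

attribute [instance] SuperModule.acg SuperModule.mod

def SuperModule.IsFree {R : Type} [Ring R] {S : SuperRingStruct R} (F : SuperModule R S)
    (I J : Type) : Prop :=
  ∃ b : Module.Basis (I ⊕ J) Rᵐᵒᵖ F.carrier,
    (∀ i, b (Sum.inl i) ∈ F.grade 0) ∧ (∀ j, b (Sum.inr j) ∈ F.grade 1)

def SuperModule.IsProjective {R : Type} [Ring R] {S : SuperRingStruct R}
    (P : SuperModule R S) : Prop :=
  ∃ (Q F : SuperModule R S) (I J : Type), F.IsFree I J ∧
    ∃ e : (P.carrier × Q.carrier) ≃ₗ[Rᵐᵒᵖ] F.carrier,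
      ∀ (i : ZMod 2) (x : P.carrier) (y : Q.carrier),
        x ∈ P.grade i → y ∈ Q.grade i → e (x, y) ∈ F.grade i

/-- With Λ, F, g as in the sphere construction, the image of g is free of rank 1 generated
by α = Σⱼ x̄ⱼ sⱼ (which has zero annihilator), and P = ker g is stably free: the map
(k, a) ↦ k + α·a is a bijection (ker g) × Λ ≃ F, i.e. P ⊕ Λα ≅ F. -/
theorem stmt_14 {Λ : Type} [Ring Λ] (S : SuperRingStruct Λ) (hS : S.IsSuperComm)
    (n : ℕ) (c : Fin (n + 1) → Λ) (hc : ∀ i, c i ∈ S.grade 0)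
    (hsum : ∑ i, (c i) ^ 2 = 1)
    (F : SuperModule Λ S) (b : Module.Basis (Fin (n + 1)) Λᵐᵒᵖ F.carrier)
    (hb : ∀ i, b i ∈ F.grade 0)
    (g : F.carrier →ₗ[Λᵐᵒᵖ] F.carrier)
    (hg : ∀ i, g (b i) = ∑ j, op (c i * c j) • b j) :
    g (∑ j, op (c j) • b j) = ∑ j, op (c j) • b j ∧
    LinearMap.range g = Submodule.span Λᵐᵒᵖ {∑ j, op (c j) • b j} ∧
    (∀ a : Λ, op a • (∑ j, op (c j) • b j) = 0 → a = 0) ∧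
    Function.Bijective (fun p : ↥(LinearMap.ker g) × Λ =>
      (p.1 : F.carrier) + op p.2 • (∑ j, op (c j) • b j)) := by
  set α := ∑ j, op (c j) • b j with hα
  have hcomm : ∀ i j, c i * c j = c j * c i := by
    intro i j
    simpa using hS (hc i) (hc j)
  have hgb : ∀ i, g (b i) = op (c i) • α := by
    intro i
    rw [hg, hα, Finset.smul_sum]
    refine Finset.sum_congr rfl fun j _ => ?_
    rw [smul_smul, ← op_mul, hcomm]
  have hgα : g α = α := by
    rw [hα, map_sum]
    have h1 : ∀ j, g (op (c j) • b j) = op (c j ^ 2) • α := by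
      intro j
      rw [map_smul, hgb, smul_smul, ← op_mul, pow_two]
    simp only [h1]
    rw [← Finset.sum_smul]
    have h2 : (∑ i, op (c i ^ 2)) = (1 : Λᵐᵒᵖ) := by
      rw [← op_one, ← hsum]
      exact (map_sum (opAddEquiv : Λ ≃+ Λᵐᵒᵖ) _ _).symm
    rw [h2, one_smul]
  have hann : ∀ a : Λ, op a • α = 0 → a = 0 := by
    intro a ha
    have hco : ∀ j, c j * a = 0 := by
      have h0 : ∑ j, op (c j * a) • b j = 0 := by
        rw [← ha, hα, Finset.smul_sum]
        refine Finset.sum_congr rfl fun j _ => ?_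
        rw [smul_smul, ← op_mul]
      have hli := Fintype.linearIndependent_iff.mp b.linearIndependent
        (fun j => op (c j * a)) h0
      intro j
      simpa using congrArg unop (hli j)
    have h3 : a = (∑ i, (c i) ^ 2) * a := by rw [hsum, one_mul]
    rw [h3, Finset.sum_mul]
    refine Finset.sum_eq_zero fun i _ => ?_
    rw [pow_two, mul_assoc, hco, mul_zero]
  have hrange : LinearMap.range g = Submodule.span Λᵐᵒᵖ {α} := by
    apply le_antisymm
    · rintro _ ⟨x, rfl⟩
      rw [← b.sum_repr x, map_sum]
      refine Submodule.sum_mem _ fun i _ => ?_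
      rw [map_smul, hgb]
      exact Submodule.smul_mem _ _
        (Submodule.smul_mem _ _ (Submodule.mem_span_singleton_self α))
    · rw [Submodule.span_singleton_le_iff_mem]
      exact ⟨α, hgα⟩
  have hidem : ∀ x, g (g x) = g x := by
    have hcomp : g.comp g = g := b.ext fun i => by
      rw [LinearMap.comp_apply, hgb, map_smul, hgα]
    intro x
    exact DFunLike.congr_fun hcomp x
  refine ⟨hgα, hrange, hann, ?_, ?_⟩
  · rintro ⟨k, a⟩ ⟨k', a'⟩ h
    simp only at h
    have hga : op a • α = op a' • α := by
      have := congrArg g h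
      simpa [map_add, map_smul, hgα, LinearMap.mem_ker.mp k.2,
        LinearMap.mem_ker.mp k'.2] using this
    have haa : a = a' := by
      have h4 : op (a - a') • α = 0 := by
        rw [op_sub, sub_smul, hga, sub_self]
      exact sub_eq_zero.mp (hann _ h4)
    have hk : (k : F.carrier) = k' := by
      rw [haa] at h
      exact add_right_cancel h
    exact Prod.ext (Subtype.ext hk) haa
  · intro v
    obtain ⟨m, hm⟩ := Submodule.mem_span_singleton.mp
      (hrange ▸ LinearMap.mem_range_self g v)
    refine ⟨⟨⟨v - g v, ?_⟩, m.unop⟩, ?_⟩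
    · rw [LinearMap.mem_ker, map_sub, hidem, sub_self]
    · simp only [op_unop]
      rw [hm]
      abel
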